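/- Assume f is twice differentiable and satisfies the cubic upper bound with constant L_H > 0, and let ε > 0. Let x ∈ ℝⁿ and let d ∈ ℝⁿ satisfy d_i = 0 whenever |x_i| ≤ √ε. Define J₊ = {i : x_i > √ε and d_i < 0} and J₋ = {i : x_i < −√ε and d_i > 0}, and set t₊ = min_{i∈J₊}(−x_i/d_i) and t₋ = min_{i∈J₋}(−x_i/d_i), each taken as +∞ when the corresponding set is empty. Then for every t ∈ (0, min{t₊, t₋}]: φ(x + t·d) ≤ φ(x) + t·⟨g(x), d⟩ + (t²/2)·⟨d, ∇²f(x)·d⟩ + (L_H/6)·t³·‖d‖³. -/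

import Mathlib

open scoped RealInnerProductSpace

noncomputable section

/-- `ℝⁿ` with the Euclidean norm. -/
abbrev E (n : ℕ) := EuclideanSpace ℝ (Fin n)

/-- The vector `g(x)` measuring first-order stationarity of `f + lam‖·‖₁`. -/
def gvec (n : ℕ) (f : E n → ℝ) (lam : ℝ) (x : E n) : E n := WithLp.toLp 2 fun i =>
  if 0 < x i then gradient f x i + lam
  else if x i < 0 then gradient f x i - lam
  else gradient f x i - min (max (-lam) (gradient f x i)) lam

/-- The proximal-gradient residual `G_t(x) = t (x - prox_{(lam/t)‖·‖₁}(x - ∇f(x)/t))`. -/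
def Gres (n : ℕ) (f : E n → ℝ) (lam t : ℝ) (x : E n) : E n := WithLp.toLp 2 fun i =>
  if (gradient f x i + lam) / t < x i then gradient f x i + lam
  else if x i < (gradient f x i - lam) / t then gradient f x i - lam
  else t * x i

/-- The proximal-gradient update `P_t(x) = prox_{(lam/t)‖·‖₁}(x - ∇f(x)/t)` (soft-thresholding). -/
def Pt (n : ℕ) (f : E n → ℝ) (lam t : ℝ) (x : E n) : E n := WithLp.toLp 2 fun i =>
  if lam / t < x i - gradient f x i / t then x i - gradient f x i / t - lam / t
  else if x i - gradient f x i / t < -(lam / t) then x i - gradient f x i / t + lam / t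
  else 0

/-- The objective `φ(x) = f(x) + lam ‖x‖₁`. -/
def phi (n : ℕ) (f : E n → ℝ) (lam : ℝ) (x : E n) : ℝ := f x + lam * ∑ i, |x i|

/-- The Hessian of `f` at `x`, as a continuous linear map. -/
def hess (n : ℕ) (f : E n → ℝ) (x : E n) : E n →L[ℝ] E n := fderiv ℝ (gradient f) x

/-- The scaling map `S_{x,ε}`: identity on coordinates with `|x_i| > √ε`, multiplication by
`x_i` on the others. -/
def Smap (n : ℕ) (x : E n) (eps : ℝ) (u : E n) : E n := WithLp.toLp 2 fun i =>
  if Real.sqrt eps < |x i| then u i else x i * u i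

/-- The relaxed first-order residual vector `g^ε(x)`. -/
def gveps (n : ℕ) (f : E n → ℝ) (lam eps : ℝ) (x : E n) : E n := WithLp.toLp 2 fun i =>
  if Real.sqrt eps < x i then gradient f x i + lam
  else if x i < -Real.sqrt eps then gradient f x i - lam
  else gradient f x i -
    min (max (-(lam + eps ^ ((3:ℝ)/4))) (gradient f x i)) (lam + eps ^ ((3:ℝ)/4))

/-- Descent-type upper bound on `φ(x + t d)` along a direction `d` supported
on the coordinates with `|x_i| > √ε`, for stepsizes `t` not exceeding the breakpoints
`t₊, t₋`. -/
theorem stmt11 {n : ℕ} (f : E n → ℝ) (hf1 : Differentiable ℝ f)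
    (hf2 : Differentiable ℝ (gradient f)) (lam : ℝ) (hlam : 0 < lam)
    (LH : ℝ) (hLH : 0 < LH)
    (hcubic : ∀ x y : E n, f y ≤ f x + ⟪gradient f x, y - x⟫ +
      1 / 2 * ⟪y - x, hess n f x (y - x)⟫ + LH / 6 * ‖y - x‖ ^ 3)
    (ε : ℝ) (hε : 0 < ε)
    (x d : E n) (hd : ∀ i, |x i| ≤ Real.sqrt ε → d i = 0)
    (t : ℝ) (ht : 0 < t)
    (htp : ∀ i, Real.sqrt ε < x i → d i < 0 → t ≤ -x i / d i)
    (htm : ∀ i, x i < -Real.sqrt ε → 0 < d i → t ≤ -x i / d i) :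
    phi n f lam (x + t • d) ≤
      phi n f lam x + t * ⟪gvec n f lam x, d⟫ +
        t ^ 2 / 2 * ⟪d, hess n f x d⟫ + LH / 6 * t ^ 3 * ‖d‖ ^ 3 := by
  have hsq : 0 < Real.sqrt ε := Real.sqrt_pos.mpr hε
  have hcb := hcubic x (x + t • d)
  have hyx : (x + t • d) - x = t • d := by abel
  rw [hyx] at hcb
  have hgsmul : ⟪gradient f x, t • d⟫ = t * ⟪gradient f x, d⟫ := real_inner_smul_right _ _ _
  have hhsmul : ⟪t • d, hess n f x (t • d)⟫ = t ^ 2 * ⟪d, hess n f x d⟫ := by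
    rw [map_smul, real_inner_smul_left, real_inner_smul_right]; ring
  have hnsmul : ‖t • d‖ ^ 3 = t ^ 3 * ‖d‖ ^ 3 := by
    rw [norm_smul, Real.norm_eq_abs, abs_of_pos ht]; ring
  rw [hgsmul, hhsmul, hnsmul] at hcb
  -- pointwise handling of the ℓ¹ term
  have hpt : ∀ i, lam * |x i + t * d i| =
      lam * |x i| + t * ((gvec n f lam x i - gradient f x i) * d i) := by
    intro i
    by_cases h1 : Real.sqrt ε < x i
    · have hx0 : 0 < x i := lt_trans hsq h1
      have hnn : 0 ≤ x i + t * d i := by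
        rcases le_or_gt 0 (d i) with hdi | hdi
        · nlinarith
        · have h := htp i h1 hdi
          have : t * d i ≥ (-x i / d i) * d i := by
            nlinarith
          have hdd : (-x i / d i) * d i = -x i := div_mul_cancel₀ _ (ne_of_lt hdi)
          linarith [hdd ▸ this]
      have hg : gvec n f lam x i = gradient f x i + lam := by
        simp [gvec, hx0]
      rw [hg, abs_of_nonneg hnn, abs_of_pos hx0]; ring
    · by_cases h2 : x i < -Real.sqrt ε
      · have hx0 : x i < 0 := by linarith
        have hnp : x i + t * d i ≤ 0 := by
          rcases le_or_gt (d i) 0 with hdi | hdi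
          · nlinarith
          · have h := htm i h2 hdi
            have : t * d i ≤ (-x i / d i) * d i := by nlinarith
            have hdd : (-x i / d i) * d i = -x i := div_mul_cancel₀ _ (ne_of_gt hdi)
            linarith [hdd ▸ this]
        have hg : gvec n f lam x i = gradient f x i - lam := by
          simp [gvec, hx0, not_lt.mpr (le_of_lt hx0)]
        rw [hg, abs_of_nonpos hnp, abs_of_neg hx0]; ring
      · have hdi : d i = 0 := hd i (abs_le.mpr ⟨by linarith, by linarith⟩)
        rw [hdi]; ring_nf
  have happly : ∀ i, (x + t • d) i = x i + t * d i := fun i => rfl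
  have hinner : ⟪gvec n f lam x, d⟫ - ⟪gradient f x, d⟫ =
      ∑ i, (gvec n f lam x i - gradient f x i) * d i := by
    simp only [PiLp.inner_apply, RCLike.inner_apply, conj_trivial, ← Finset.sum_sub_distrib]
    congr 1; ext i; ring
  have hl1 : lam * ∑ i, |(x + t • d) i| =
      lam * ∑ i, |x i| + t * (⟪gvec n f lam x, d⟫ - ⟪gradient f x, d⟫) := by
    rw [hinner, Finset.mul_sum, Finset.mul_sum, Finset.mul_sum]
    rw [← Finset.sum_add_distrib]
    apply Finset.sum_congr rfl
    intro i _
    rw [happly i, hpt i]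
  unfold phi
  rw [hl1]
  linarith
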